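/- Let A be a real n×m matrix of rank r and let k < r. Consider minimizing G(P,Q) = ‖A − PQᵀ‖² over P ∈ ℝ^{n×k} and Q ∈ ℝ^{m×k} of rank k subject to QᵀQ = I_k. Then the choice Q = V_{(1:k)} (the first k right singular vectors of A) and P = U_{(1:k)}·diag(σ₁,…,σ_k) attains the minimum; i.e., for every P' ∈ ℝ^{n×k}, Q' ∈ ℝ^{m×k} with Q'ᵀQ' = I_k one has ‖A − PQᵀ‖ ≤ ‖A − P'Q'ᵀ‖, and PQᵀ = Σ_{i=1}^k σ_i U_i V_iᵀ. -/

import Mathlib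

open Matrix BigOperators

/-- Squared Frobenius norm of a real matrix. -/
noncomputable def frobSq {n m : ℕ} (X : Matrix (Fin n) (Fin m) ℝ) : ℝ :=
  ∑ i, ∑ j, (X i j) ^ 2

/-- Frobenius norm of a real matrix. -/
noncomputable def frobNorm {n m : ℕ} (X : Matrix (Fin n) (Fin m) ℝ) : ℝ :=
  Real.sqrt (frobSq X)

lemma frobSq_nonneg {n m : ℕ} (X : Matrix (Fin n) (Fin m) ℝ) : 0 ≤ frobSq X :=
  Finset.sum_nonneg fun _ _ => Finset.sum_nonneg fun _ _ => sq_nonneg _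

lemma frobSq_eq_trace {n m : ℕ} (X : Matrix (Fin n) (Fin m) ℝ) :
    frobSq X = Matrix.trace (X * Xᵀ) := by
  simp [frobSq, Matrix.trace, Matrix.mul_apply, Matrix.diag, sq]

lemma frobSq_unit_left {n m : ℕ} (W : Matrix (Fin n) (Fin n) ℝ) (X : Matrix (Fin n) (Fin m) ℝ)
    (hW : Wᵀ * W = 1) : frobSq (W * X) = frobSq X := by
  rw [frobSq_eq_trace, frobSq_eq_trace, transpose_mul, Matrix.mul_assoc,
    ← Matrix.mul_assoc X, Matrix.trace_mul_comm, Matrix.mul_assoc, Matrix.mul_assoc, hW, Matrix.mul_one,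
    ← Matrix.trace_mul_comm]

lemma frobSq_unit_right {n m : ℕ} (W : Matrix (Fin m) (Fin m) ℝ) (X : Matrix (Fin n) (Fin m) ℝ)
    (hW : Wᵀ * W = 1) : frobSq (X * Wᵀ) = frobSq X := by
  rw [frobSq_eq_trace, frobSq_eq_trace, transpose_mul, transpose_transpose,
    Matrix.mul_assoc, ← Matrix.mul_assoc Wᵀ, hW, Matrix.one_mul]

lemma frobSq_expand {n m k : ℕ} (S : Matrix (Fin n) (Fin m) ℝ) (P : Matrix (Fin n) (Fin k) ℝ)
    (Q : Matrix (Fin m) (Fin k) ℝ) (hQ : Qᵀ * Q = 1) :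
    frobSq (S - P * Qᵀ) = frobSq S - frobSq (S * Q) + frobSq (S * Q - P) := by
  have key : (S - P * Qᵀ) * (S - P * Qᵀ)ᵀ
      = S * Sᵀ - (S * Q) * (S * Q)ᵀ + (S * Q - P) * (S * Q - P)ᵀ := by
    have h1 : P * Qᵀ * (Q * Pᵀ) = P * Pᵀ := by
      rw [Matrix.mul_assoc, ← Matrix.mul_assoc Qᵀ, hQ, Matrix.one_mul]
    have h2 : S * Q * (Qᵀ * Sᵀ) = S * Q * (S * Q)ᵀ := by rw [transpose_mul]
    simp only [transpose_sub, transpose_mul, transpose_transpose, Matrix.sub_mul, Matrix.mul_sub]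
    rw [h1, h2, Matrix.mul_assoc P, Matrix.mul_assoc S Q Pᵀ]
    abel
  rw [frobSq_eq_trace, key, Matrix.trace_add, Matrix.trace_sub,
    ← frobSq_eq_trace, ← frobSq_eq_trace, ← frobSq_eq_trace]

lemma sum_fin_ite {N : ℕ} (c : ℕ) (g : Fin N → ℝ) :
    (∑ j : Fin N, if c = (j : ℕ) then g j else 0) = if h : c < N then g ⟨c, h⟩ else 0 := by
  by_cases h : c < N
  · rw [dif_pos h, Finset.sum_eq_single (⟨c, h⟩ : Fin N)]
    · simp
    · intro b _ hb
      rw [if_neg]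
      intro hc
      exact hb (by simp [Fin.ext_iff, ← hc])
    · simp
  · rw [dif_neg h]
    apply Finset.sum_eq_zero
    intro j _
    rw [if_neg]
    intro hc
    exact h (hc ▸ j.isLt)

lemma sum_fin_castLE {N K : ℕ} (hKN : K ≤ N) (g : Fin K → ℝ) :
    (∑ i : Fin N, if h : (i : ℕ) < K then g ⟨(i : ℕ), h⟩ else 0) = ∑ t : Fin K, g t :=
  calc (∑ i : Fin N, if h : (i : ℕ) < K then g ⟨(i : ℕ), h⟩ else 0)
      = ∑ i ∈ Finset.range N, (fun i => if h : i < K then g ⟨i, h⟩ else 0) i :=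
        Fin.sum_univ_eq_sum_range (fun i => if h : i < K then g ⟨i, h⟩ else 0) N
    _ = ∑ i ∈ Finset.range K, (fun i => if h : i < K then g ⟨i, h⟩ else 0) i :=
        (Finset.sum_subset (Finset.range_subset_range.2 hKN)
          (fun x _ hx => dif_neg (by simpa using hx))).symm
    _ = ∑ i : Fin K, (fun i => if h : i < K then g ⟨i, h⟩ else 0) (i : ℕ) :=
        (Fin.sum_univ_eq_sum_range (fun i => if h : i < K then g ⟨i, h⟩ else 0) K).symm
    _ = ∑ t : Fin K, g t := Finset.sum_congr rfl (fun t _ => by simp [t.isLt])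

lemma majorization (σ c : ℕ → ℝ) (k n : ℕ) (hkn : k ≤ n)
    (hσ0 : ∀ i, 0 ≤ σ i) (hsort : ∀ i j, i ≤ j → σ j ≤ σ i)
    (hc0 : ∀ i, 0 ≤ c i) (hc1 : ∀ i, c i ≤ 1)
    (hsum : ∑ i ∈ Finset.range n, c i ≤ (k : ℝ)) :
    ∑ i ∈ Finset.range n, σ i ^ 2 * c i ≤ ∑ i ∈ Finset.range k, σ i ^ 2 := by
  have hsplit : ∑ i ∈ Finset.range n, σ i ^ 2 * c i
      = ∑ i ∈ Finset.range k, σ i ^ 2 * c i + ∑ i ∈ Finset.Ico k n, σ i ^ 2 * c i := by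
    rw [Finset.range_eq_Ico, Finset.range_eq_Ico]
    exact (Finset.sum_Ico_consecutive _ (Nat.zero_le k) hkn).symm
  have hsplit2 : ∑ i ∈ Finset.range n, c i
      = ∑ i ∈ Finset.range k, c i + ∑ i ∈ Finset.Ico k n, c i := by
    rw [Finset.range_eq_Ico, Finset.range_eq_Ico]
    exact (Finset.sum_Ico_consecutive _ (Nat.zero_le k) hkn).symm
  have h1 : ∑ i ∈ Finset.range k, σ i ^ 2 * c i
      ≤ ∑ i ∈ Finset.range k, (σ i ^ 2 + σ k ^ 2 * (c i - 1)) := by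
    apply Finset.sum_le_sum
    intro i hi
    have h := hsort i k (le_of_lt (Finset.mem_range.1 hi))
    have hsq : σ k ^ 2 ≤ σ i ^ 2 := by nlinarith [hσ0 i, hσ0 k]
    nlinarith [mul_nonneg (sub_nonneg.2 hsq) (sub_nonneg.2 (hc1 i))]
  have h2 : ∑ i ∈ Finset.Ico k n, σ i ^ 2 * c i ≤ ∑ i ∈ Finset.Ico k n, σ k ^ 2 * c i := by
    apply Finset.sum_le_sum
    intro i hi
    have h := hsort k i (Finset.mem_Ico.1 hi).1
    have hsq : σ i ^ 2 ≤ σ k ^ 2 := by nlinarith [hσ0 i, hσ0 k]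
    exact mul_le_mul_of_nonneg_right hsq (hc0 i)
  have h3 : ∑ i ∈ Finset.range k, (σ i ^ 2 + σ k ^ 2 * (c i - 1))
      = ∑ i ∈ Finset.range k, σ i ^ 2 + σ k ^ 2 * (∑ i ∈ Finset.range k, c i - k) := by
    have hh : ∑ x ∈ Finset.range k, (c x - 1) = ∑ i ∈ Finset.range k, c i - k := by
      rw [Finset.sum_sub_distrib, Finset.sum_const, Finset.card_range, nsmul_eq_mul, mul_one]
    rw [Finset.sum_add_distrib, ← Finset.mul_sum, hh]
  have h4 : ∑ i ∈ Finset.Ico k n, σ k ^ 2 * c i = σ k ^ 2 * ∑ i ∈ Finset.Ico k n, c i := by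
    rw [Finset.mul_sum]
  nlinarith [sq_nonneg (σ k), hsum, hsplit, hsplit2, h1, h2, h3, h4]

lemma mulDiag {n m : ℕ} (U : Matrix (Fin n) (Fin n) ℝ) (V : Matrix (Fin m) (Fin m) ℝ)
    (φ : ℕ → ℝ) (a : Fin n) (b : Fin m) :
    (U * (Matrix.of fun (i : Fin n) (j : Fin m) =>
        if (i : ℕ) = (j : ℕ) then φ (i : ℕ) else 0) * Vᵀ) a b
      = ∑ i : Fin n, if h : (i : ℕ) < m then φ (i : ℕ) * U a i * V b ⟨(i : ℕ), h⟩ else 0 := by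
  rw [Matrix.mul_assoc, Matrix.mul_apply]
  apply Finset.sum_congr rfl
  intro i _
  rw [Matrix.mul_apply]
  have h1 : ∀ j : Fin m, (Matrix.of fun (i : Fin n) (j : Fin m) =>
      if (i : ℕ) = (j : ℕ) then φ (i : ℕ) else 0) i j * Vᵀ j b
      = if (i : ℕ) = (j : ℕ) then φ (i : ℕ) * V b j else 0 := by
    intro j
    simp [Matrix.transpose_apply, ite_mul]
  rw [Finset.sum_congr rfl (fun j _ => h1 j), sum_fin_ite (i : ℕ) (fun j => φ (i : ℕ) * V b j)]
  by_cases h : (i : ℕ) < m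
  · rw [dif_pos h, dif_pos h]; ring
  · rw [dif_neg h, dif_neg h, mul_zero]

lemma frobSq_diag {n m : ℕ} (φ : ℕ → ℝ) (hφ : ∀ i, m ≤ i → φ i = 0) :
    frobSq (Matrix.of fun (i : Fin n) (j : Fin m) =>
        if (i : ℕ) = (j : ℕ) then φ (i : ℕ) else 0)
      = ∑ i ∈ Finset.range n, φ i ^ 2 := by
  rw [← Fin.sum_univ_eq_sum_range (fun i => φ i ^ 2) n]
  unfold frobSq
  apply Finset.sum_congr rfl
  intro i _
  have h1 : ∀ j : Fin m, ((Matrix.of fun (i : Fin n) (j : Fin m) =>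
      if (i : ℕ) = (j : ℕ) then φ (i : ℕ) else 0) i j) ^ 2
      = if (i : ℕ) = (j : ℕ) then φ (i : ℕ) ^ 2 else 0 := by
    intro j
    simp only [Matrix.of_apply]
    split <;> simp
  rw [Finset.sum_congr rfl (fun j _ => h1 j), sum_fin_ite (i : ℕ) (fun _ => φ (i : ℕ) ^ 2)]
  by_cases h : (i : ℕ) < m
  · rw [dif_pos h]
  · rw [dif_neg h, hφ _ (le_of_not_gt h)]
    simp

/-- **PCA-type factorisation**: minimising `‖A - PQᵀ‖` subject to `QᵀQ = Iₖ`
is achieved by `Q = V_{(1:k)}` (first `k` right singular vectors) and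
`P = U_{(1:k)} diag(σ₁,…,σₖ)`, and then `PQᵀ = ∑_{i<k} σᵢ Uᵢ Vᵢᵀ`. -/
theorem pca_type_factorisation {n m r k : ℕ} (hkn : k ≤ n) (hkm : k ≤ m)
    (A : Matrix (Fin n) (Fin m) ℝ)
    (U : Matrix (Fin n) (Fin n) ℝ) (V : Matrix (Fin m) (Fin m) ℝ)
    (S : Matrix (Fin n) (Fin m) ℝ) (σ : ℕ → ℝ)
    (hU : Uᵀ * U = 1) (hU' : U * Uᵀ = 1)
    (hV : Vᵀ * V = 1) (hV' : V * Vᵀ = 1)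
    (hS : ∀ i j, S i j = if (i : ℕ) = (j : ℕ) then σ (i : ℕ) else 0)
    (hσpos : ∀ i, i < r → 0 < σ i)
    (hσzero : ∀ i, r ≤ i → σ i = 0)
    (hσsorted : ∀ i j, i ≤ j → σ j ≤ σ i)
    (hA : A = U * S * Vᵀ)
    (hrank : A.rank = r) (hk : k < r)
    (P : Matrix (Fin n) (Fin k) ℝ) (Q : Matrix (Fin m) (Fin k) ℝ)
    (hQ : Q = Matrix.of fun a i => V a (Fin.castLE hkm i))
    (hP : P = Matrix.of fun a i => U a (Fin.castLE hkn i) * σ (i : ℕ)) :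
    (∀ (P' : Matrix (Fin n) (Fin k) ℝ) (Q' : Matrix (Fin m) (Fin k) ℝ),
        Q'ᵀ * Q' = 1 → frobNorm (A - P * Qᵀ) ≤ frobNorm (A - P' * Q'ᵀ)) ∧
      P * Qᵀ = ∑ i : Fin k,
        σ (i : ℕ) • vecMulVec (fun a => U a (Fin.castLE hkn i)) (fun b => V b (Fin.castLE hkm i)) := by
  have hrm : r ≤ m := by
    rw [← hrank]
    simpa using A.rank_le_card_width
  have hσ0 : ∀ i, 0 ≤ σ i := by
    intro i
    by_cases h : i < r
    · exact (hσpos i h).le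
    · rw [hσzero i (le_of_not_gt h)]
  -- part 2
  have part2 : P * Qᵀ = ∑ i : Fin k,
      σ (i : ℕ) • vecMulVec (fun a => U a (Fin.castLE hkn i)) (fun b => V b (Fin.castLE hkm i)) := by
    ext a b
    rw [Matrix.mul_apply, Matrix.sum_apply]
    apply Finset.sum_congr rfl
    intro t _
    simp [hP, hQ, Matrix.vecMulVec_apply, Matrix.smul_apply]
    ring
  -- S as a "diagonal" rectangular matrix
  have hSD : S = Matrix.of (fun (i : Fin n) (j : Fin m) =>
      if (i : ℕ) = (j : ℕ) then σ (i : ℕ) else 0) := by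
    ext i j
    simp [hS]
  set σ₂ : ℕ → ℝ := fun i => if i < k then 0 else σ i with hσ₂def
  have hPQ : A - P * Qᵀ = U * (Matrix.of fun (i : Fin n) (j : Fin m) =>
      if (i : ℕ) = (j : ℕ) then σ₂ (i : ℕ) else 0) * Vᵀ := by
    ext a b
    rw [Matrix.sub_apply, hA, hSD, mulDiag U V σ a b, mulDiag U V σ₂ a b]
    have hPQe : (P * Qᵀ) a b = ∑ i : Fin n, (if h : (i : ℕ) < m then
        (if (i : ℕ) < k then σ (i : ℕ) else 0) * U a i * V b ⟨(i : ℕ), h⟩ else 0) := by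
      rw [Matrix.mul_apply,
        ← sum_fin_castLE hkn (fun t : Fin k => P a t * Qᵀ t b)]
      apply Finset.sum_congr rfl
      intro i _
      by_cases h : (i : ℕ) < k
      · rw [dif_pos h, dif_pos (lt_of_lt_of_le h hkm), if_pos h]
        simp only [hP, hQ, Matrix.of_apply, Matrix.transpose_apply, Fin.castLE_mk, Fin.eta]
        ring
      · rw [dif_neg h]
        by_cases h2 : (i : ℕ) < m
        · rw [dif_pos h2, if_neg h, zero_mul, zero_mul]
        · rw [dif_neg h2]
    rw [hPQe, ← Finset.sum_sub_distrib]
    apply Finset.sum_congr rfl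
    intro i _
    by_cases h : (i : ℕ) < m
    · rw [dif_pos h, dif_pos h, dif_pos h]
      simp only [hσ₂def]
      split <;> ring
    · rw [dif_neg h, dif_neg h, dif_neg h, sub_zero]
  have hσ₂zero : ∀ i, m ≤ i → σ₂ i = 0 := by
    intro i hi
    simp only [hσ₂def]
    rw [hσzero i (le_trans hrm hi)]
    split <;> rfl
  have hfA : frobSq (A - P * Qᵀ) = ∑ i ∈ Finset.range n, σ₂ i ^ 2 := by
    rw [hPQ, Matrix.mul_assoc, frobSq_unit_left U _ hU, frobSq_unit_right V _ hV,
      frobSq_diag σ₂ hσ₂zero]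
  have hval : ∑ i ∈ Finset.range n, σ₂ i ^ 2
      = ∑ i ∈ Finset.range n, σ i ^ 2 - ∑ i ∈ Finset.range k, σ i ^ 2 := by
    have e1 : ∀ i, σ₂ i ^ 2 = σ i ^ 2 - (if i < k then σ i ^ 2 else 0) := by
      intro i
      simp only [hσ₂def]
      split <;> simp
    rw [Finset.sum_congr rfl (fun i _ => e1 i), Finset.sum_sub_distrib]
    congr 1
    refine ((Finset.sum_subset (Finset.range_subset_range.2 hkn)
      (fun x _ hx => if_neg (by simpa using hx))).symm).trans ?_
    exact Finset.sum_congr rfl fun x hx => if_pos (Finset.mem_range.1 hx)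
  have hS_frob : frobSq S = ∑ i ∈ Finset.range n, σ i ^ 2 := by
    rw [hSD, frobSq_diag σ (fun i hi => hσzero i (le_trans hrm hi))]
  refine ⟨?_, part2⟩
  intro P' Q' hQ'
  set Q₂ : Matrix (Fin m) (Fin k) ℝ := Vᵀ * Q' with hQ₂def
  set P₂ : Matrix (Fin n) (Fin k) ℝ := Uᵀ * P' with hP₂def
  have hQ₂t : Q₂ᵀ = Q'ᵀ * V := by
    rw [hQ₂def, transpose_mul, transpose_transpose]
  have hQ₂ : Q₂ᵀ * Q₂ = 1 := by
    rw [hQ₂t, hQ₂def, Matrix.mul_assoc, ← Matrix.mul_assoc V, hV', Matrix.one_mul, hQ']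
  have hred : frobSq (A - P' * Q'ᵀ) = frobSq (S - P₂ * Q₂ᵀ) := by
    have e : S - P₂ * Q₂ᵀ = Uᵀ * ((A - P' * Q'ᵀ) * V) := by
      rw [Matrix.sub_mul, Matrix.mul_sub]
      congr 1
      · rw [hA, Matrix.mul_assoc (U * S), hV, Matrix.mul_one, ← Matrix.mul_assoc, hU,
          Matrix.one_mul]
      · rw [hP₂def, hQ₂t, Matrix.mul_assoc Uᵀ P' (Q'ᵀ * V), ← Matrix.mul_assoc P' Q'ᵀ V]
    rw [e, frobSq_unit_left Uᵀ _ (by rw [transpose_transpose]; exact hU'),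
      show (A - P' * Q'ᵀ) * V = (A - P' * Q'ᵀ) * Vᵀᵀ by rw [transpose_transpose],
      frobSq_unit_right Vᵀ _ (by rw [transpose_transpose]; exact hV')]
  have hexp := frobSq_expand S P₂ Q₂ hQ₂
  set c : ℕ → ℝ := fun l => if h : l < m then ∑ j : Fin k, (Q₂ ⟨l, h⟩ j) ^ 2 else 0 with hcdef
  have hentry : ∀ (i : Fin n) (j : Fin k), (S * Q₂) i j
      = if h : (i : ℕ) < m then σ (i : ℕ) * Q₂ ⟨(i : ℕ), h⟩ j else 0 := by
    intro i j
    rw [Matrix.mul_apply]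
    have e : ∀ l : Fin m, S i l * Q₂ l j
        = if (i : ℕ) = (l : ℕ) then σ (i : ℕ) * Q₂ l j else 0 := by
      intro l
      rw [hS]
      split <;> simp
    rw [Finset.sum_congr rfl (fun l _ => e l), sum_fin_ite]
  have hSQ : frobSq (S * Q₂) = ∑ i ∈ Finset.range n, σ i ^ 2 * c i := by
    rw [← Fin.sum_univ_eq_sum_range (fun i => σ i ^ 2 * c i) n]
    unfold frobSq
    apply Finset.sum_congr rfl
    intro i _
    by_cases h : (i : ℕ) < m
    · have e : ∀ j : Fin k, ((S * Q₂) i j) ^ 2 = σ (i : ℕ) ^ 2 * (Q₂ ⟨(i : ℕ), h⟩ j) ^ 2 := by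
        intro j
        rw [hentry i j, dif_pos h]
        ring
      rw [Finset.sum_congr rfl (fun j _ => e j), ← Finset.mul_sum]
      simp only [hcdef]
      rw [dif_pos h]
    · have e : ∀ j : Fin k, ((S * Q₂) i j) ^ 2 = 0 := by
        intro j
        rw [hentry i j, dif_neg h]
        ring
      rw [Finset.sum_congr rfl (fun j _ => e j), Finset.sum_const, smul_zero]
      simp only [hcdef]
      rw [dif_neg h, mul_zero]
  have hc0 : ∀ l, 0 ≤ c l := by
    intro l
    simp only [hcdef]
    split
    · exact Finset.sum_nonneg fun j _ => sq_nonneg _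
    · rfl
  have hc1 : ∀ l, c l ≤ 1 := by
    intro l
    simp only [hcdef]
    by_cases h : l < m
    · rw [dif_pos h]
      set l' : Fin m := ⟨l, h⟩
      set M : Matrix (Fin m) (Fin m) ℝ := Q₂ * Q₂ᵀ with hMdef
      have hMM : M * M = M := by
        rw [hMdef, Matrix.mul_assoc, ← Matrix.mul_assoc Q₂ᵀ, hQ₂, Matrix.one_mul]
      have hsym : ∀ p q, M p q = M q p := by
        intro p q
        rw [hMdef, Matrix.mul_apply, Matrix.mul_apply]
        exact Finset.sum_congr rfl fun x _ => by rw [Matrix.transpose_apply, Matrix.transpose_apply, mul_comm]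
      have hdd : M l' l' = ∑ j : Fin m, (M l' j) ^ 2 := by
        conv_lhs => rw [← hMM]
        rw [Matrix.mul_apply]
        exact Finset.sum_congr rfl fun j _ => by rw [hsym j l', sq]
      have hcl : (∑ j : Fin k, (Q₂ l' j) ^ 2) = M l' l' := by
        rw [hMdef, Matrix.mul_apply]
        exact Finset.sum_congr rfl fun j _ => by rw [Matrix.transpose_apply, sq]
      have hle : (M l' l') ^ 2 ≤ M l' l' := by
        conv_rhs => rw [hdd]
        exact Finset.single_le_sum (f := fun j => (M l' j) ^ 2)
          (fun j _ => sq_nonneg _) (Finset.mem_univ l')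
      rw [hcl]
      nlinarith [hle]
    · rw [dif_neg h]
      norm_num
  have hcsum : ∑ l ∈ Finset.range n, c l ≤ (k : ℝ) := by
    have step1 : ∑ l ∈ Finset.range n, c l ≤ ∑ l ∈ Finset.range (n + m), c l :=
      Finset.sum_le_sum_of_subset_of_nonneg
        (Finset.range_subset_range.2 (Nat.le_add_right n m)) (fun i _ _ => hc0 i)
    have step2 : ∑ l ∈ Finset.range (n + m), c l = ∑ l ∈ Finset.range m, c l :=
      (Finset.sum_subset (Finset.range_subset_range.2 (Nat.le_add_left m n))
        (fun x _ hx => by simp only [hcdef]; exact dif_neg (by simpa using hx))).symm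
    have step3 : ∑ l ∈ Finset.range m, c l = ∑ l : Fin m, ∑ j : Fin k, (Q₂ l j) ^ 2 := by
      rw [← Fin.sum_univ_eq_sum_range c m]
      apply Finset.sum_congr rfl
      intro l _
      simp only [hcdef]
      rw [dif_pos l.isLt]
    have step4 : ∑ l : Fin m, ∑ j : Fin k, (Q₂ l j) ^ 2 = (k : ℝ) := by
      rw [Finset.sum_comm]
      have ht := congrArg Matrix.trace hQ₂
      simp only [Matrix.trace, Matrix.diag, Matrix.mul_apply, Matrix.transpose_apply,
        Matrix.one_apply_eq, Finset.sum_const, Finset.card_univ, Fintype.card_fin,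
        nsmul_eq_mul, mul_one] at ht
      rw [← ht]
      apply Finset.sum_congr rfl
      intro j _
      apply Finset.sum_congr rfl
      intro l _
      ring
    linarith [step1, step2.le, step3.le, step4.le]
  have hmaj := majorization σ c k n hkn hσ0 hσsorted hc0 hc1 hcsum
  have hge : frobSq (A - P * Qᵀ) ≤ frobSq (A - P' * Q'ᵀ) := by
    rw [hfA, hval, hred, hexp, hS_frob, hSQ]
    have hnn := frobSq_nonneg (S * Q₂ - P₂)
    linarith [hmaj]
  unfold frobNorm
  exact Real.sqrt_le_sqrt hge
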